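/- There exists a (necessarily unique) k-algebra homomorphism s : L → H with s(ζ̄) = g^{p−1}y, where ζ̄ is the image of ζ in L; equivalently, (g^{p−1}y)^p = 0 holds in H. Moreover, π ∘ s = id_L, where π : H → L is the algebra homomorphism determined by π(x) = 0, π(g) = 1, π(y) = ζ̄. -/

import Mathlib

noncomputable section

namespace JordanBos

variable (k : Type*) [Field k]

/-- Generators: `x = ι 0`, `y = ι 1`, `g = ι 2`. -/
def X : FreeAlgebra k (Fin 3) := FreeAlgebra.ι k (0 : Fin 3)
def Y : FreeAlgebra k (Fin 3) := FreeAlgebra.ι k (1 : Fin 3)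
def G : FreeAlgebra k (Fin 3) := FreeAlgebra.ι k (2 : Fin 3)

/-- The defining relations of `H = B(V(1,2)) # kΓ`: the elements
`x^p`, `y^p`, `g^p − 1`, `gx − xg`, `gy − yg − xg`, `yx − xy + (1/2)x²`
are set to `0`; `RingQuot` of this relation is the quotient by the two-sided
ideal they generate. -/
def rel (p : ℕ) : FreeAlgebra k (Fin 3) → FreeAlgebra k (Fin 3) → Prop :=
  fun a b =>
    (a = (X k) ^ p ∨ a = (Y k) ^ p ∨ a = (G k) ^ p - 1 ∨
      a = G k * X k - X k * G k ∨
      a = G k * Y k - Y k * G k - X k * G k ∨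
      a = Y k * X k - X k * Y k + (2⁻¹ : k) • (X k) ^ 2) ∧ b = 0

/-- The Hopf algebra `H`. -/
def H (p : ℕ) := RingQuot (rel k p)

instance (p : ℕ) : Ring (H k p) := inferInstanceAs (Ring (RingQuot (rel k p)))

instance (p : ℕ) : Algebra k (H k p) :=
  inferInstanceAs (Algebra k (RingQuot (rel k p)))

def xH (p : ℕ) : H k p := RingQuot.mkAlgHom k (rel k p) (X k)
def yH (p : ℕ) : H k p := RingQuot.mkAlgHom k (rel k p) (Y k)
def gH (p : ℕ) : H k p := RingQuot.mkAlgHom k (rel k p) (G k)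

end JordanBos

open JordanBos

/-- `L = k[ζ]/(ζ^p)`. -/
def Ldiv (k : Type*) [Field k] (p : ℕ) :=
  Polynomial k ⧸ Ideal.span ({Polynomial.X ^ p} : Set (Polynomial k))

instance (k : Type*) [Field k] (p : ℕ) : CommRing (Ldiv k p) :=
  inferInstanceAs (CommRing (Polynomial k ⧸
    Ideal.span ({Polynomial.X ^ p} : Set (Polynomial k))))

instance (k : Type*) [Field k] (p : ℕ) : Algebra k (Ldiv k p) :=
  inferInstanceAs (Algebra k (Polynomial k ⧸
    Ideal.span ({Polynomial.X ^ p} : Set (Polynomial k))))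

/-- The image `ζ̄` of `ζ` in `L`. -/
def zeta (k : Type*) [Field k] (p : ℕ) : Ldiv k p :=
  Ideal.Quotient.mk (Ideal.span ({Polynomial.X ^ p} : Set (Polynomial k)))
    Polynomial.X

/-! ### Auxiliary development -/

namespace JBAux

open JordanBos Finset

/-- Integer coefficients in the normal-form expansion of the twisted products. -/
def cc (n b : ℕ) : ℕ := n.choose b * (n-1).descFactorial b

lemma cc_zero (n : ℕ) : cc n 0 = 1 := by simp [cc]

lemma cc_rec (n b : ℕ) :
    (cc (n+1) (b+1) : ℤ) = cc n (b+1) + (2*(n:ℤ) - b) * cc n b := by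
  cases n with
  | zero =>
      rcases b with _ | b <;> simp [cc]
  | succ m =>
      rcases le_or_gt b m with hb | hb
      · have key := Nat.choose_succ_right_eq (m+1) b
        have hb' : b ≤ m + 1 := hb.trans (Nat.le_succ m)
        simp only [cc, Nat.succ_sub_one, Nat.choose_succ_succ (m+1) b,
          Nat.succ_descFactorial_succ, Nat.descFactorial_succ]
        zify [hb'] at key
        push_cast [Nat.cast_sub hb, Nat.cast_sub hb']
        linear_combination (m.descFactorial b : ℤ) * key
      · have h1 : m.descFactorial b = 0 := Nat.descFactorial_of_lt hb
        have h2 : m.descFactorial (b+1) = 0 :=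
          Nat.descFactorial_of_lt (hb.trans (Nat.lt_succ_self b))
        simp [cc, Nat.succ_descFactorial_succ, h1, h2]
        omega

lemma cc_p_cast_zero (k : Type*) [Field k] (p : ℕ) (hp : p.Prime) [CharP k p]
    (b : ℕ) (hb : 1 ≤ b) : (cc p b : k) = 0 := by
  rcases lt_or_ge b p with h | h
  · have : (p : ℕ) ∣ cc p b :=
      Dvd.dvd.mul_right (hp.dvd_choose_self (Nat.one_le_iff_ne_zero.mp hb) h) _
    exact (CharP.cast_eq_zero_iff k p _).mpr this
  · have : (p-1).descFactorial b = 0 :=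
      Nat.descFactorial_of_lt (by omega)
    simp [cc, this]

variable (k : Type*) [Field k] (p : ℕ)

/-- The defining relations, realized in `H`. -/
lemma hx_pow : xH k p ^ p = 0 := by
  have h := RingQuot.mkAlgHom_rel k (s := rel k p)
    (x := X k ^ p) (y := 0) ⟨Or.inl rfl, rfl⟩
  simp only [map_pow, map_zero] at h
  exact h

lemma hy_pow : yH k p ^ p = 0 := by
  have h := RingQuot.mkAlgHom_rel k (s := rel k p)
    (x := Y k ^ p) (y := 0) ⟨Or.inr (Or.inl rfl), rfl⟩
  simp only [map_pow, map_zero] at h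
  exact h

lemma hg_pow : gH k p ^ p = 1 := by
  have h := RingQuot.mkAlgHom_rel k (s := rel k p)
    (x := G k ^ p - 1) (y := 0) ⟨Or.inr (Or.inr (Or.inl rfl)), rfl⟩
  have h2 : gH k p ^ p - 1 = 0 := by
    simp only [map_sub, map_pow, map_one, map_zero] at h
    exact h
  exact sub_eq_zero.mp h2

lemma hgx : gH k p * xH k p = xH k p * gH k p := by
  have h := RingQuot.mkAlgHom_rel k (s := rel k p)
    (x := G k * X k - X k * G k) (y := 0) ⟨Or.inr (Or.inr (Or.inr (Or.inl rfl))), rfl⟩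
  have h2 : gH k p * xH k p - xH k p * gH k p = 0 := by
    simp only [map_sub, map_mul, map_zero] at h
    exact h
  exact sub_eq_zero.mp h2

lemma hgy : gH k p * yH k p = yH k p * gH k p + xH k p * gH k p := by
  have h := RingQuot.mkAlgHom_rel k (s := rel k p)
    (x := G k * Y k - Y k * G k - X k * G k) (y := 0)
    ⟨Or.inr (Or.inr (Or.inr (Or.inr (Or.inl rfl)))), rfl⟩
  have h2 : gH k p * yH k p - yH k p * gH k p - xH k p * gH k p = 0 := by
    simp only [map_sub, map_mul, map_zero] at h
    exact h
  rw [sub_sub] at h2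
  exact sub_eq_zero.mp h2

lemma hyx : yH k p * xH k p = xH k p * yH k p - (2⁻¹ : k) • (xH k p)^2 := by
  have h := RingQuot.mkAlgHom_rel k (s := rel k p)
    (x := Y k * X k - X k * Y k + (2⁻¹ : k) • (X k)^2) (y := 0)
    ⟨Or.inr (Or.inr (Or.inr (Or.inr (Or.inr rfl)))), rfl⟩
  have h2 : yH k p * xH k p - xH k p * yH k p + (2⁻¹ : k) • (xH k p)^2 = 0 := by
    simp only [map_sub, map_add, map_mul, map_smul, map_pow, map_zero] at h
    exact h
  have h3 : yH k p * xH k p - (xH k p * yH k p - (2⁻¹ : k) • (xH k p)^2) = 0 := by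
    calc yH k p * xH k p - (xH k p * yH k p - (2⁻¹ : k) • (xH k p)^2)
        = yH k p * xH k p - xH k p * yH k p + (2⁻¹ : k) • (xH k p)^2 := by abel
      _ = 0 := h2
  exact sub_eq_zero.mp h3


def xp : H k p := (2⁻¹ : k) • xH k p

lemma hyxp : yH k p * xp k p = xp k p * yH k p - xp k p * xp k p := by
  rw [xp, mul_smul_comm, hyx, smul_sub, smul_mul_assoc, smul_mul_assoc,
    mul_smul_comm, smul_smul, smul_smul, pow_two]

lemma y_xp_pow (b : ℕ) :
    yH k p * xp k p ^ b = xp k p ^ b * yH k p - (b : k) • xp k p ^ (b+1) := by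
  induction b with
  | zero => simp
  | succ b ih =>
      have h1 : yH k p * xp k p ^ (b+1) = (yH k p * xp k p ^ b) * xp k p := by
        rw [mul_assoc, pow_succ]
      rw [h1, ih, sub_mul, smul_mul_assoc, mul_assoc, hyxp, mul_sub]
      push_cast
      rw [add_smul, one_smul]
      have e1 : xp k p ^ b * (xp k p * yH k p) = xp k p ^ (b+1) * yH k p := by
        rw [← mul_assoc, ← pow_succ]
      have e2 : xp k p ^ b * (xp k p * xp k p) = xp k p ^ (b+1+1) := by
        rw [← mul_assoc, ← pow_succ, ← pow_succ]
      have e3 : xp k p ^ (b+1) * xp k p = xp k p ^ (b+1+1) := by rw [← pow_succ]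
      rw [e1, e2, e3]
      abel


def Q : ℕ → H k p
  | 0 => 1
  | n+1 => (yH k p + (n : k) • xH k p) * Q n

lemma two_ne_zero' (hp : p.Prime) (hodd : Odd p) [CharP k p] : (2:k) ≠ 0 := by
  intro h
  have h2 : ((2:ℕ):k) = 0 := by exact_mod_cast h
  have hdvd := (CharP.cast_eq_zero_iff k p 2).mp h2
  have : p = 2 := (Nat.prime_dvd_prime_iff_eq hp Nat.prime_two).mp hdvd
  rw [this, Nat.odd_iff] at hodd
  omega

lemma x_eq_two_smul (h2 : (2:k) ≠ 0) : xH k p = (2:k) • xp k p := by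
  rw [xp, smul_smul, mul_inv_cancel₀ h2, one_smul]

lemma Q_eq (h2 : (2:k) ≠ 0) (n : ℕ) :
    Q k p n = ∑ b ∈ Finset.range (n+1),
      (cc n b : k) • (xp k p ^ b * yH k p ^ (n - b)) := by
  induction n with
  | zero => simp [Q, cc_zero]
  | succ n ih =>
      have hT : ∀ b m : ℕ, yH k p * (xp k p ^ b * yH k p ^ m)
          = xp k p ^ b * yH k p ^ (m+1) - (b:k) • (xp k p ^ (b+1) * yH k p ^ m) := by
        intro b m
        rw [← mul_assoc, y_xp_pow k p, sub_mul, smul_mul_assoc, mul_assoc, ← pow_succ']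
      have hX : ∀ b m : ℕ, xp k p * (xp k p ^ b * yH k p ^ m)
          = xp k p ^ (b+1) * yH k p ^ m := by
        intro b m; rw [← mul_assoc, ← pow_succ']
      show (yH k p + (n:k) • xH k p) * Q k p n = _
      rw [ih, x_eq_two_smul k p h2, add_mul, smul_mul_assoc, smul_mul_assoc,
        Finset.mul_sum, Finset.mul_sum]
      simp only [mul_smul_comm, hT, hX, smul_sub, smul_smul, Finset.smul_sum]
      rw [Finset.sum_sub_distrib]
      have hA : (∑ b ∈ Finset.range (n+1),
            (cc n b : k) • (xp k p ^ b * yH k p ^ (n - b + 1)))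
          = yH k p ^ (n+1) + ∑ b ∈ Finset.range (n+1),
              (cc n (b+1) : k) • (xp k p ^ (b+1) * yH k p ^ (n - b)) := by
        rw [Finset.sum_range_succ']
        rw [Finset.sum_range_succ
          (fun b => (cc n (b+1) : k) • (xp k p ^ (b+1) * yH k p ^ (n - b)))]
        have hz : (cc n (n+1) : k) = 0 := by
          simp [cc, Nat.choose_eq_zero_of_lt (Nat.lt_succ_self n)]
        have hcong : ∀ b ∈ Finset.range n,
            (cc n (b+1) : k) • (xp k p ^ (b+1) * yH k p ^ (n - (b+1) + 1))
              = (cc n (b+1) : k) • (xp k p ^ (b+1) * yH k p ^ (n - b)) := by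
          intro b hb
          have hb' := Finset.mem_range.mp hb
          rw [show n - (b+1) + 1 = n - b by omega]
        rw [Finset.sum_congr rfl hcong, hz, zero_smul, add_zero]
        simp [cc_zero]
        abel
      rw [hA]
      conv_rhs => rw [Finset.sum_range_succ']
      simp only [Nat.succ_sub_succ, Nat.sub_zero, pow_zero, one_mul, cc_zero,
        Nat.cast_one, one_smul]
      have hR : ∀ b ∈ Finset.range (n+1),
          (cc (n+1) (b+1) : k) • (xp k p ^ (b+1) * yH k p ^ (n - b))
            = (cc n (b+1) : k) • (xp k p ^ (b+1) * yH k p ^ (n - b))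
              + ((2*(n:k) - b) * (cc n b : k)) • (xp k p ^ (b+1) * yH k p ^ (n - b)) := by
        intro b hb
        have h' := congrArg (fun z : ℤ => (z : k)) (cc_rec n b)
        push_cast at h'
        rw [h', add_smul]
      rw [Finset.sum_congr rfl hR, Finset.sum_add_distrib]
      have hD : (∑ b ∈ Finset.range (n+1),
            ((n:k) * (2 * (cc n b : k))) • (xp k p ^ (b+1) * yH k p ^ (n - b)))
          - ∑ b ∈ Finset.range (n+1),
              ((cc n b : k) * b) • (xp k p ^ (b+1) * yH k p ^ (n - b))
          = ∑ b ∈ Finset.range (n+1),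
              ((2*(n:k) - b) * (cc n b : k)) • (xp k p ^ (b+1) * yH k p ^ (n - b)) := by
        rw [← Finset.sum_sub_distrib]
        apply Finset.sum_congr rfl
        intro b hb
        rw [← sub_smul]
        congr 1
        ring
      rw [← hD]
      abel

lemma Q_p_zero (hp : p.Prime) (hodd : Odd p) [CharP k p] : Q k p p = 0 := by
  have h2 := two_ne_zero' k p hp hodd
  rw [Q_eq k p h2, Finset.sum_range_succ']
  have hz : ∀ b ∈ Finset.range p,
      (cc p (b+1) : k) • (xp k p ^ (b+1) * yH k p ^ (p - (b+1))) = 0 := by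
    intro b _
    rw [cc_p_cast_zero k p hp (b+1) (Nat.succ_le_succ (Nat.zero_le b)), zero_smul]
  rw [Finset.sum_congr rfl hz, Finset.sum_const_zero, zero_add]
  simp [cc_zero, hy_pow]

lemma hgx_pow (m : ℕ) : xH k p * gH k p ^ m = gH k p ^ m * xH k p := by
  have c : Commute (gH k p) (xH k p) := hgx k p
  exact ((c.pow_left m).symm).eq

lemma hyg_pow (m : ℕ) :
    yH k p * gH k p ^ m = gH k p ^ m * yH k p - (m:k) • (xH k p * gH k p ^ m) := by
  induction m with
  | zero => simp
  | succ m ih =>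
      have h1 : yH k p * gH k p ^ (m+1) = (yH k p * gH k p ^ m) * gH k p := by
        rw [mul_assoc, pow_succ]
      have hyg : yH k p * gH k p = gH k p * yH k p - xH k p * gH k p := by
        rw [hgy]; abel
      rw [h1, ih, sub_mul, smul_mul_assoc, mul_assoc, hyg, mul_sub]
      push_cast
      rw [add_smul, one_smul]
      have e1 : gH k p ^ m * (gH k p * yH k p) = gH k p ^ (m+1) * yH k p := by
        rw [← mul_assoc, ← pow_succ]
      have e2 : gH k p ^ m * (xH k p * gH k p) = xH k p * gH k p ^ (m+1) := by
        rw [← mul_assoc, ← hgx_pow, mul_assoc, ← pow_succ]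
      have e3 : xH k p * gH k p ^ m * gH k p = xH k p * gH k p ^ (m+1) := by
        rw [mul_assoc, ← pow_succ]
      rw [e1, e2, e3]
      abel

lemma z_pow (hp : p.Prime) [CharP k p] (n : ℕ) :
    (gH k p ^ (p-1) * yH k p) ^ n = gH k p ^ ((p-1)*n) * Q k p n := by
  induction n with
  | zero => simp [Q]
  | succ n ih =>
      rw [pow_succ', ih, mul_assoc, ← mul_assoc (yH k p), hyg_pow]
      have hm : (((p-1)*n : ℕ) : k) = - (n : k) := by
        push_cast [Nat.cast_sub hp.one_le]
        rw [CharP.cast_eq_zero]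
        ring
      rw [hm, neg_smul, sub_neg_eq_add]
      show _ = gH k p ^ ((p-1)*(n+1)) * ((yH k p + (n:k) • xH k p) * Q k p n)
      rw [show (p-1)*(n+1) = (p-1) + (p-1)*n by ring, pow_add]
      simp only [add_mul, mul_add, smul_mul_assoc, mul_smul_comm, ← mul_assoc]
      rw [mul_assoc (gH k p ^ (p-1)) (xH k p) (gH k p ^ ((p-1)*n)),
        hgx_pow k p ((p-1)*n), ← mul_assoc]

lemma z_pow_p (hp : p.Prime) (hodd : Odd p) [CharP k p] :
    (gH k p ^ (p-1) * yH k p) ^ p = 0 := by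
  rw [z_pow k p hp p, Q_p_zero k p hp hodd, mul_zero]

end JBAux

lemma Ldiv_hom_ext {k : Type*} [Field k] {p : ℕ} {B : Type*} [Semiring B]
    [Algebra k B] {f g : Ldiv k p →ₐ[k] B} (h : f (zeta k p) = g (zeta k p)) :
    f = g := by
  apply Ideal.Quotient.algHom_ext k
    (I := Ideal.span ({Polynomial.X ^ p} : Set (Polynomial k)))
  apply Polynomial.algHom_ext
  exact h


/-- Let `k` be a field of odd prime characteristic `p`, `H`
the bosonization of the restricted Jordan plane and `L = k[ζ]/(ζ^p)`.  There
is a unique algebra map `s : L → H` with `s(ζ̄) = g^{p−1}y`; equivalently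
`(g^{p−1}y)^p = 0` in `H`.  Moreover `π ∘ s = id_L`, where `π : H → L` is the
algebra map with `π(x) = 0`, `π(g) = 1`, `π(y) = ζ̄`. -/
theorem jordan_bosonization_section
    (k : Type*) [Field k] (p : ℕ) (hp : p.Prime) (hodd : Odd p)
    [CharP k p] :
    ((gH k p ^ (p - 1) * yH k p) ^ p = 0) ∧
    (∃! s : Ldiv k p →ₐ[k] H k p,
      s (zeta k p) = gH k p ^ (p - 1) * yH k p) ∧
    (∀ π : H k p →ₐ[k] Ldiv k p,
      (π (xH k p) = 0 ∧ π (gH k p) = 1 ∧ π (yH k p) = zeta k p) →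
      ∀ s : Ldiv k p →ₐ[k] H k p,
        s (zeta k p) = gH k p ^ (p - 1) * yH k p →
          π.comp s = AlgHom.id k (Ldiv k p)) := by
  have hz : (gH k p ^ (p - 1) * yH k p) ^ p = 0 := JBAux.z_pow_p k p hp hodd
  have hmem : ∀ a ∈ Ideal.span ({Polynomial.X ^ p} : Set (Polynomial k)),
      (Polynomial.aeval (gH k p ^ (p - 1) * yH k p)) a = 0 := by
    intro a ha
    rw [Ideal.mem_span_singleton] at ha
    obtain ⟨c, rfl⟩ := ha
    rw [map_mul, map_pow, Polynomial.aeval_X, hz, zero_mul]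
  set s₀ : Ldiv k p →ₐ[k] H k p :=
    Ideal.Quotient.liftₐ _ (Polynomial.aeval (gH k p ^ (p - 1) * yH k p)) hmem
    with hs₀def
  have hs₀ : s₀ (zeta k p) = gH k p ^ (p - 1) * yH k p := by
    rw [hs₀def]
    show Ideal.Quotient.liftₐ _ _ hmem (Ideal.Quotient.mk _ Polynomial.X) = _
    rw [Ideal.Quotient.liftₐ_apply]
    exact Polynomial.aeval_X _
  refine ⟨hz, ⟨s₀, hs₀, fun s' h' => Ldiv_hom_ext (h'.trans hs₀.symm)⟩, ?_⟩
  rintro π ⟨hπx, hπg, hπy⟩ s hs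
  apply Ldiv_hom_ext (p := p)
  show π (s (zeta k p)) = AlgHom.id k (Ldiv k p) (zeta k p)
  rw [hs, map_mul, map_pow, hπg, hπy, one_pow, one_mul, AlgHom.coe_id, id_eq]
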